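/- In a weakly orthogonal TRS, if u is a Y-redex in a term t (i.e., there are redexes v₁, v₂ at disjoint positions with u connected to both v₁ and v₂ by chains of pattern overlaps), then contracting u leaves t unchanged: the result of the contraction equals t. -/

import Mathlib

open PFunctor

universe u

variable (F : Type) (ar : F → ℕ)

/-- The polynomial functor whose M-type is the type of possibly infinite
terms over the signature `F` (with arities `ar`) and variables `ℕ`:
a node is either a function symbol (with `ar f` children) or a variable
(with no children). -/
abbrev TermPF : PFunctor.{0} :=
  ⟨F ⊕ ℕ, fun a => Fin (Sum.elim ar (fun _ => 0) a)⟩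

/-- Possibly infinite terms (coinductive trees) over signature `F`. -/
def ITerm : Type := (TermPF F ar).M

/-- Finite terms over signature `F`, used for left-hand sides of rules. -/
inductive FTerm : Type
  | var : ℕ → FTerm
  | app : (f : F) → (Fin (ar f) → FTerm) → FTerm

variable {F ar}

/-- Embedding of finite terms into possibly infinite terms. -/
def FTerm.toI : FTerm F ar → ITerm F ar
  | .var x => M.mk ⟨Sum.inr x, fun i => i.elim0⟩
  | .app f c => M.mk ⟨Sum.inl f, fun i => (c i).toI⟩

/-- Application of a substitution `σ` to a possibly infinite term: every
variable node `x` is replaced by the term `σ x` (corecursively; the marker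
records whether we are already inside a substituted term). -/
def substI (σ : ℕ → ITerm F ar) (t : ITerm F ar) : ITerm F ar :=
  M.corec (fun s : Bool × ITerm F ar =>
    if s.1 then ⟨(M.dest s.2).1, fun i => (true, (M.dest s.2).2 i)⟩
    else
      match M.dest s.2 with
      | ⟨Sum.inl f, cs⟩ => ⟨Sum.inl f, fun i => (false, cs i)⟩
      | ⟨Sum.inr x, _⟩ => ⟨(M.dest (σ x)).1, fun i => (true, (M.dest (σ x)).2 i)⟩)
    (false, t)

/-- The subterm of a term at a position (a list of argument indices),
if the position exists. -/
def subAt? : List ℕ → ITerm F ar → Option (ITerm F ar)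
  | [], t => some t
  | i :: p, t =>
      if h : i < Sum.elim ar (fun _ => 0) (M.dest t).1 then
        subAt? p ((M.dest t).2 ⟨i, h⟩)
      else none

/-- The symbol (function symbol or variable) at a position of a term. -/
def symAt? (t : ITerm F ar) (p : List ℕ) : Option (F ⊕ ℕ) :=
  (subAt? p t).map fun u => (M.dest u).1

/-- `replaceAt t p u` is the term obtained from `t` by replacing the subterm
at position `p` by `u` (defined corecursively). -/
def replaceAt (t : ITerm F ar) (p : List ℕ) (u : ITerm F ar) : ITerm F ar :=
  M.corec (fun s : (List ℕ × ITerm F ar) ⊕ ITerm F ar =>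
    match s with
    | Sum.inl ([], _) => ⟨(M.dest u).1, fun i => Sum.inr ((M.dest u).2 i)⟩
    | Sum.inl (i :: p', v) =>
        ⟨(M.dest v).1, fun j =>
          if (j : ℕ) = i then Sum.inl (p', (M.dest v).2 j)
          else Sum.inr ((M.dest v).2 j)⟩
    | Sum.inr v => ⟨(M.dest v).1, fun i => Sum.inr ((M.dest v).2 i)⟩)
    (Sum.inl (p, t))

/-- The list of variable occurrences of a finite term (from left to right). -/
def FTerm.varsList : FTerm F ar → List ℕ
  | .var x => [x]
  | .app _ c => (List.ofFn fun i => (c i).varsList).flatten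

/-- The pattern positions of a finite term: the positions carrying a function
symbol (non-variable positions). -/
def FTerm.patPos : FTerm F ar → Set (List ℕ)
  | .var _ => ∅
  | .app f c => {[]} ∪ ⋃ i : Fin (ar f), (fun q => (i : ℕ) :: q) '' (c i).patPos

/-- The positions of the variable `x` in a finite term. -/
def FTerm.varPos : FTerm F ar → ℕ → Set (List ℕ)
  | .var y, x => if y = x then {[]} else ∅
  | .app f c, x => ⋃ i : Fin (ar f), (fun q => (i : ℕ) :: q) '' (c i).varPos x

variable (F ar)

/-- An infinitary rewrite rule: a finite left-hand side that is not a
variable, and a possibly infinite right-hand side all of whose variables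
occur in the left-hand side. -/
structure Rule : Type where
  lhs : FTerm F ar
  rhs : ITerm F ar
  lhs_nonvar : ∀ x, lhs ≠ .var x
  varcond : ∀ x p, symAt? rhs p = some (Sum.inr x) → x ∈ lhs.varsList

variable {F ar}

/-- A rule is left-linear if no variable occurs twice in its left-hand side. -/
def Rule.LeftLinear (ρ : Rule F ar) : Prop := ρ.lhs.varsList.Nodup

/-- A rule is collapsing if its right-hand side is a variable. -/
def Rule.Collapsing (ρ : Rule F ar) : Prop := ∃ x, (M.dest ρ.rhs).1 = Sum.inr x

variable (F ar)

/-- A (candidate) redex: a position, a rule and a matching substitution. -/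
structure Rdx : Type where
  pos : List ℕ
  rule : Rule F ar
  sub : ℕ → ITerm F ar

variable {F ar}

/-- `u.In R t`: `u` is a redex of the term `t` with respect to the rewrite
system `R`: its rule belongs to `R` and the subterm of `t` at `u.pos` is the
corresponding instance of the left-hand side. -/
def Rdx.In (u : Rdx F ar) (R : Set (Rule F ar)) (t : ITerm F ar) : Prop :=
  u.rule ∈ R ∧ subAt? u.pos t = some (substI u.sub u.rule.lhs.toI)

/-- The result of contracting the redex `u` in the term `t`. -/
def Rdx.result (u : Rdx F ar) (t : ITerm F ar) : ITerm F ar :=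
  replaceAt t u.pos (substI u.sub u.rule.rhs)

/-- Two redexes overlap if their patterns share a position. -/
def Rdx.Overlaps (u v : Rdx F ar) : Prop :=
  ∃ q, (∃ r ∈ u.rule.lhs.patPos, q = u.pos ++ r) ∧
    (∃ r ∈ v.rule.lhs.patPos, q = v.pos ++ r)

/-- A weakly orthogonal iTRS: all rules are left-linear and all critical
pairs are trivial, i.e. contracting either of two overlapping redexes of a
term always yields the same result. -/
def WeaklyOrthogonal (R : Set (Rule F ar)) : Prop :=
  (∀ ρ ∈ R, ρ.LeftLinear) ∧
  ∀ (t : ITerm F ar) (u v : Rdx F ar),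
    u.In R t → v.In R t → u.Overlaps v → u.result t = v.result t

/-- The overlap relation on the redexes of a fixed term `t`. -/
def OverlapIn {F : Type} {ar : F → ℕ} (R : Set (Rule F ar)) (t : ITerm F ar)
    (u v : Rdx F ar) : Prop :=
  u.In R t ∧ v.In R t ∧ u.Overlaps v

/-- Two positions are disjoint if neither is a prefix of the other. -/
def DisjPos (p q : List ℕ) : Prop := ¬ p <+: q ∧ ¬ q <+: p

/-- `u` is a Y-redex of `t`: `u` is a redex of `t` that is connected by chains
of pattern overlaps (within `t`) to two redexes `v₁`, `v₂` of `t` at disjoint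
positions. -/
def YRedex {F : Type} {ar : F → ℕ} (R : Set (Rule F ar)) (t : ITerm F ar)
    (u : Rdx F ar) : Prop :=
  u.In R t ∧ ∃ v₁ v₂ : Rdx F ar, v₁.In R t ∧ v₂.In R t ∧
    Relation.ReflTransGen (OverlapIn R t) u v₁ ∧
    Relation.ReflTransGen (OverlapIn R t) u v₂ ∧
    DisjPos v₁.pos v₂.pos


section Aux

variable {F : Type} {ar : F → ℕ}

private lemma symAt?_nil (t : ITerm F ar) : symAt? t [] = some (M.dest t).1 := rfl

private lemma symAt?_cons (t : ITerm F ar) (i : ℕ) (p : List ℕ) :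
    symAt? t (i :: p) =
      if h : i < Sum.elim ar (fun _ => 0) (M.dest t).1 then
        symAt? ((M.dest t).2 ⟨i, h⟩) p
      else none := by
  simp only [symAt?, subAt?]
  split <;> rfl

/-- Extensionality: two infinite terms with the same symbol at every position
are equal. -/
private lemma iterm_ext {x y : ITerm F ar}
    (h : ∀ p, symAt? x p = symAt? y p) : x = y := by
  refine M.bisim (fun a b => ∀ p, symAt? (F := F) (ar := ar) a p = symAt? b p)
    ?_ x y h
  intro a b hab
  rcases hx : M.dest a with ⟨fa, ga⟩
  rcases hy : M.dest b with ⟨fb, gb⟩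
  have h0 : fa = fb := by
    have := hab []
    rw [symAt?_nil (t := a), symAt?_nil (t := b), hx, hy] at this
    exact Option.some_inj.mp this
  subst h0
  refine ⟨fa, ga, gb, rfl, rfl, fun i p => ?_⟩
  have := hab ((i : ℕ) :: p)
  rw [symAt?_cons (t := a), symAt?_cons (t := b), hx, hy, dif_pos i.isLt, dif_pos i.isLt] at this
  simpa using this

/-- The corecursion functional used in `replaceAt`. -/
private def repF (u : ITerm F ar) :
    (List ℕ × ITerm F ar) ⊕ ITerm F ar →
      (TermPF F ar) ((List ℕ × ITerm F ar) ⊕ ITerm F ar) := fun s =>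
  match s with
  | Sum.inl ([], _) => ⟨(M.dest u).1, fun i => Sum.inr ((M.dest u).2 i)⟩
  | Sum.inl (i :: p', v) =>
      ⟨(M.dest v).1, fun j =>
        if (j : ℕ) = i then Sum.inl (p', (M.dest v).2 j)
        else Sum.inr ((M.dest v).2 j)⟩
  | Sum.inr v => ⟨(M.dest v).1, fun i => Sum.inr ((M.dest v).2 i)⟩

private lemma replaceAt_eq (t : ITerm F ar) (p : List ℕ) (u : ITerm F ar) :
    replaceAt t p u = M.corec (repF u) (Sum.inl (p, t)) := rfl

private lemma corec_repF_inr (u v : ITerm F ar) :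
    M.corec (repF u) (Sum.inr v) = v := by
  refine M.bisim (fun a b => a = M.corec (repF u) (Sum.inr b)) ?_ _ _ rfl
  intro a b hab
  subst hab
  refine ⟨(M.dest b).1, fun i => M.corec (repF u) (Sum.inr ((M.dest b).2 i)),
    (M.dest b).2, ?_, (Sigma.eta _).symm, fun i => rfl⟩
  rw [M.dest_corec]
  rfl

private lemma replaceAt_nil (t u : ITerm F ar) : replaceAt t [] u = u := by
  have hd : M.dest (replaceAt t [] u) = M.dest u := by
    rw [replaceAt_eq, M.dest_corec]
    show (⟨(M.dest u).1, fun i => M.corec (repF u) (Sum.inr ((M.dest u).2 i))⟩ :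
      (TermPF F ar) (ITerm F ar)) = M.dest u
    conv_rhs => rw [← Sigma.eta (M.dest u)]
    congr 1
    funext i
    exact corec_repF_inr u _
  rw [← M.mk_dest (replaceAt t [] u), hd]
  exact M.mk_dest _

private lemma dest_replaceAt_cons (t u : ITerm F ar) (i : ℕ) (p : List ℕ) :
    M.dest (replaceAt t (i :: p) u) =
      ⟨(M.dest t).1, fun j =>
        if (j : ℕ) = i then replaceAt ((M.dest t).2 j) p u
        else (M.dest t).2 j⟩ := by
  rw [replaceAt_eq, M.dest_corec]
  show (⟨(M.dest t).1, fun j => M.corec (repF u)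
      (if (j : ℕ) = i then Sum.inl (p, (M.dest t).2 j)
       else Sum.inr ((M.dest t).2 j))⟩ : (TermPF F ar) (ITerm F ar)) = _
  congr 1
  funext j
  split_ifs with h
  · exact (if_pos h).symm
  · exact (corec_repF_inr u _).trans (if_neg h).symm

/-- Outside the replaced position, symbols are unchanged. -/
private lemma symAt?_replaceAt (u : ITerm F ar) :
    ∀ (q p : List ℕ) (t : ITerm F ar), ¬ p <+: q →
      symAt? (replaceAt t p u) q = symAt? t q := by
  intro q
  induction q with
  | nil =>
    intro p t hp
    cases p with
    | nil => exact absurd List.nil_prefix hp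
    | cons i p' =>
      rw [symAt?_nil, symAt?_nil, dest_replaceAt_cons]
  | cons j q' ih =>
    intro p t hp
    cases p with
    | nil => exact absurd List.nil_prefix hp
    | cons i p' =>
      rw [symAt?_cons, symAt?_cons, dest_replaceAt_cons]
      simp only
      split
      · next h =>
        by_cases hji : j = i
        · subst hji
          simp only [if_pos (rfl : j = j)]
          refine ih p' _ (fun hc => hp ?_)
          exact List.cons_prefix_cons.mpr ⟨rfl, hc⟩
        · exact congrArg (fun x => symAt? x q') (if_neg hji)
      · rfl

private lemma cluster_result {R : Set (Rule F ar)} (hWO : WeaklyOrthogonal R)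
    {t : ITerm F ar} {a b : Rdx F ar}
    (h : Relation.ReflTransGen (OverlapIn R t) a b) :
    a.result t = b.result t := by
  induction h with
  | refl => rfl
  | tail _ step ih => exact ih.trans (hWO.2 t _ _ step.1 step.2.1 step.2.2)

end Aux

/-- in a weakly orthogonal TRS, contracting a Y-redex `u` of a
term `t` leaves `t` unchanged. -/
theorem statement15 {F : Type} {ar : F → ℕ} (R : Set (Rule F ar))
    (hWO : WeaklyOrthogonal R) (t : ITerm F ar) (u : Rdx F ar)
    (hY : YRedex R t u) :
    u.result t = t := by
  obtain ⟨hu, v₁, v₂, hv₁, hv₂, hc₁, hc₂, hdisj⟩ := hY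
  have e₁ : u.result t = v₁.result t := cluster_result hWO hc₁
  have e₂ : u.result t = v₂.result t := cluster_result hWO hc₂
  rw [e₁]
  apply iterm_ext
  intro q
  by_cases h1 : v₁.pos <+: q
  · have h2 : ¬ v₂.pos <+: q := by
      intro h2
      rcases le_total v₁.pos.length v₂.pos.length with hl | hl
      · exact hdisj.1 (List.prefix_of_prefix_length_le h1 h2 hl)
      · exact hdisj.2 (List.prefix_of_prefix_length_le h2 h1 hl)
    rw [← e₁, e₂]
    exact symAt?_replaceAt _ q _ t h2
  · exact symAt?_replaceAt _ q _ t h1
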